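/- Let F : ℝ²₁ → ℝ²₁ be a causal automorphism of two-dimensional Minkowski spacetime. Then there exist unique homeomorphisms φ and ψ of ℝ, either both increasing or both decreasing, such that: if both are increasing, F(x,t) = ½(φ(x+t)+ψ(x−t), φ(x+t)−ψ(x−t)); if both are decreasing, F(x,t) = ½(φ(x−t)+ψ(x+t), φ(x−t)−ψ(x+t)). Conversely, for any such pair (φ, ψ) the map F defined by these formulas is a causal automorphism of ℝ²₁. -/

import Mathlib

/-- The causal relation of two-dimensional Minkowski spacetime `ℝ²₁` (points `(x, t)`):
`p ≤ q` iff `t₂ − t₁ ≥ |x₂ − x₁|`. -/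
def MinkRel (p q : ℝ × ℝ) : Prop := |q.1 - p.1| ≤ q.2 - p.2

/-- `F` has the form prescribed by Theorem 2.2 of the paper, for the pair of homeomorphisms
`(φ, ψ)` of `ℝ`, which are either both increasing or both decreasing. -/
def MinkForm (φ ψ : ℝ ≃ₜ ℝ) (F : ℝ × ℝ → ℝ × ℝ) : Prop :=
  (StrictMono φ ∧ StrictMono ψ ∧
    ∀ x t : ℝ, F (x, t) = ((φ (x + t) + ψ (x - t)) / 2, (φ (x + t) - ψ (x - t)) / 2)) ∨
  (StrictAnti φ ∧ StrictAnti ψ ∧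
    ∀ x t : ℝ, F (x, t) = ((φ (x - t) + ψ (x + t)) / 2, (φ (x - t) - ψ (x + t)) / 2))

private lemma minkRel_iff (p q : ℝ × ℝ) :
    MinkRel p q ↔ p.1 + p.2 ≤ q.1 + q.2 ∧ q.1 - q.2 ≤ p.1 - p.2 := by
  unfold MinkRel
  rw [abs_sub_le_iff]
  constructor <;> rintro ⟨h1, h2⟩ <;> exact ⟨by linarith, by linarith⟩

private noncomputable def eMink : (ℝ × ℝ) ≃ (ℝ × ℝ) where
  toFun p := (p.1 + p.2, p.2 - p.1)
  invFun q := ((q.1 - q.2) / 2, (q.1 + q.2) / 2)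
  left_inv p := by simp [Prod.ext_iff]; constructor <;> ring
  right_inv q := by simp [Prod.ext_iff]; constructor <;> ring

private lemma dich {A : ℝ → ℝ → ℝ}
    (h : ∀ (u u' w w' : ℝ), u' ≤ u → w ≤ w' →
      (A u' w = A u w ∧ A u' w' = A u w') ∨ (A u w = A u w' ∧ A u' w = A u' w')) :
    (∀ u w w', A u w = A u w') ∨ (∀ u u' w, A u w = A u' w) := by
  by_cases hc : ∀ u w w', A u w = A u w'
  · exact Or.inl hc
  push_neg at hc
  obtain ⟨u0, w0, w1, hne0⟩ := hc
  obtain ⟨a, b, hab, hne⟩ : ∃ a b, a < b ∧ A u0 a ≠ A u0 b := by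
    rcases lt_trichotomy w0 w1 with h' | h' | h'
    · exact ⟨w0, w1, h', hne0⟩
    · exact absurd (by rw [h']) hne0
    · exact ⟨w1, w0, h', fun e => hne0 e.symm⟩
  have key : ∀ u, A u a = A u0 a ∧ A u b = A u0 b := by
    intro u
    rcases le_total u u0 with h1 | h1
    · rcases h u0 u a b h1 hab.le with ⟨e1, e2⟩ | ⟨e1, e2⟩
      · exact ⟨e1, e2⟩
      · exact absurd e1 hne
    · rcases h u u0 a b h1 hab.le with ⟨e1, e2⟩ | ⟨e1, e2⟩
      · exact ⟨e1.symm, e2.symm⟩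
      · exact absurd e2 hne
  have aux : ∀ {u u' : ℝ}, u' ≤ u → ∀ w, A u w = A u' w := by
    intro u u' huu w
    rcases le_total w a with hw | hw
    · rcases h u u' w a huu hw with ⟨e1, e2⟩ | ⟨e1, e2⟩
      · exact e1.symm
      · rw [e1, e2, (key u).1, (key u').1]
    · rcases h u u' a w huu hw with ⟨e1, e2⟩ | ⟨e1, e2⟩
      · exact e2.symm
      · rw [← e1, ← e2, (key u).1, (key u').1]
  exact Or.inr fun u u' w =>
    (le_total u' u).elim (fun h' => aux h' w) fun h' => (aux h' w).symm

private lemma exists_form (F : Equiv.Perm (ℝ × ℝ))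
    (hF : ∀ p q, MinkRel p q ↔ MinkRel (F p) (F q)) :
    ∃ pr : (ℝ ≃ₜ ℝ) × (ℝ ≃ₜ ℝ), MinkForm pr.1 pr.2 F := by
  set G : Equiv.Perm (ℝ × ℝ) := eMink.symm.trans (F.trans eMink) with hGdef
  have h1 : ∀ r s : ℝ × ℝ, MinkRel r s ↔ eMink r ≤ eMink s := by
    intro r s
    rw [minkRel_iff]
    simp only [eMink, Equiv.coe_fn_mk, Prod.le_def]
    constructor <;> rintro ⟨x, y⟩ <;> exact ⟨by linarith, by linarith⟩
  have hG : ∀ p q : ℝ × ℝ, p ≤ q ↔ G p ≤ G q := by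
    intro p q
    have e1 : p = eMink (eMink.symm p) := (eMink.apply_symm_apply p).symm
    have e2 : q = eMink (eMink.symm q) := (eMink.apply_symm_apply q).symm
    calc p ≤ q ↔ MinkRel (eMink.symm p) (eMink.symm q) := by
            rw [h1]; exact ⟨fun h => by rwa [← e1, ← e2], fun h => by rwa [← e1, ← e2] at h⟩
      _ ↔ MinkRel (F (eMink.symm p)) (F (eMink.symm q)) := hF _ _
      _ ↔ G p ≤ G q := by rw [h1]; rfl
  have hsup : ∀ p q : ℝ × ℝ, G (p ⊔ q) = G p ⊔ G q := by
    intro p q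
    apply le_antisymm
    · obtain ⟨r, hr⟩ := G.surjective (G p ⊔ G q)
      have hp : p ≤ r := (hG p r).mpr (hr ▸ le_sup_left)
      have hq : q ≤ r := (hG q r).mpr (hr ▸ le_sup_right)
      calc G (p ⊔ q) ≤ G r := (hG _ _).mp (sup_le hp hq)
        _ = G p ⊔ G q := hr
    · exact sup_le ((hG _ _).mp le_sup_left) ((hG _ _).mp le_sup_right)
  have hinf : ∀ p q : ℝ × ℝ, G (p ⊓ q) = G p ⊓ G q := by
    intro p q
    apply le_antisymm
    · exact le_inf ((hG _ _).mp inf_le_left) ((hG _ _).mp inf_le_right)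
    · obtain ⟨r, hr⟩ := G.surjective (G p ⊓ G q)
      have hp : r ≤ p := (hG r p).mpr (hr ▸ inf_le_left)
      have hq : r ≤ q := (hG r q).mpr (hr ▸ inf_le_right)
      calc G p ⊓ G q = G r := hr.symm
        _ ≤ G (p ⊓ q) := (hG _ _).mp (le_inf hp hq)
  set A : ℝ → ℝ → ℝ := fun u w => (G (u, w)).1 with hAdef
  set B : ℝ → ℝ → ℝ := fun u w => (G (u, w)).2 with hBdef
  have hrect : ∀ (u u' w w' : ℝ), u' ≤ u → w ≤ w' →
      G (u, w') = G (u, w) ⊔ G (u', w') ∧ G (u', w) = G (u, w) ⊓ G (u', w') := by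
    intro u u' w w' h1 h2
    have esup : ((u, w) : ℝ × ℝ) ⊔ (u', w') = (u, w') :=
      Prod.ext (sup_eq_left.mpr h1) (sup_eq_right.mpr h2)
    have einf : ((u, w) : ℝ × ℝ) ⊓ (u', w') = (u', w) :=
      Prod.ext (inf_eq_right.mpr h1) (inf_eq_left.mpr h2)
    exact ⟨esup ▸ hsup (u, w) (u', w'), einf ▸ hinf (u, w) (u', w')⟩
  have hrectC : ∀ (C : ℝ → ℝ → ℝ), (C = A ∨ C = B) → ∀ (u u' w w' : ℝ), u' ≤ u → w ≤ w' →
      (C u' w = C u w ∧ C u' w' = C u w') ∨ (C u w = C u w' ∧ C u' w = C u' w') := by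
    rintro C hC u u' w w' h1 h2
    obtain ⟨e1, e2⟩ := hrect u u' w w' h1 h2
    have f1 : C u w' = max (C u w) (C u' w') := by
      rcases hC with rfl | rfl
      · exact congrArg Prod.fst e1
      · exact congrArg Prod.snd e1
    have f2 : C u' w = min (C u w) (C u' w') := by
      rcases hC with rfl | rfl
      · exact congrArg Prod.fst e2
      · exact congrArg Prod.snd e2
    rcases le_total (C u w) (C u' w') with hle | hle
    · left
      constructor
      · rw [f2, min_eq_left hle]
      · rw [f1, max_eq_right hle]
    · right
      constructor
      · rw [f1, max_eq_left hle]
      · rw [f2, min_eq_right hle]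
  have hAd := dich (hrectC A (Or.inl rfl))
  have hBd := dich (hrectC B (Or.inr rfl))
  rcases hAd with hA | hA <;> rcases hBd with hB | hB
  · exfalso
    have hgg : G (0, 0) = G (0, 1) := Prod.ext (hA 0 0 1) (hB 0 0 1)
    have := G.injective hgg
    simpa using congrArg Prod.snd this
  · -- increasing case: G (u, w) = (f u, h w)
    set f : ℝ → ℝ := fun u => A u 0 with hfdef
    set h : ℝ → ℝ := fun w => B 0 w with hhdef
    have hGfh : ∀ u w : ℝ, G (u, w) = (f u, h w) := fun u w =>
      Prod.ext (hA u w 0) (hB u 0 w)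
    have hfmono : Monotone f := by
      intro a c hac
      have hle : ((a, 0) : ℝ × ℝ) ≤ (c, 0) := ⟨hac, le_refl 0⟩
      have := (hG _ _).mp hle
      rw [hGfh, hGfh] at this
      exact this.1
    have hfinj : Function.Injective f := by
      intro a c hac
      have hgg : G (a, 0) = G (c, 0) := by rw [hGfh, hGfh, hac]
      exact congrArg Prod.fst (G.injective hgg)
    have hfsurj : Function.Surjective f := by
      intro c
      obtain ⟨p, hp⟩ := G.surjective (c, h 0)
      refine ⟨p.1, ?_⟩
      have h2 : G (p.1, p.2) = (f p.1, h p.2) := hGfh p.1 p.2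
      rw [Prod.mk.eta, hp] at h2
      exact (congrArg Prod.fst h2.symm)
    have hhmono : Monotone h := by
      intro a c hac
      have hle : ((0, a) : ℝ × ℝ) ≤ (0, c) := ⟨le_refl 0, hac⟩
      have := (hG _ _).mp hle
      rw [hGfh, hGfh] at this
      exact this.2
    have hhinj : Function.Injective h := by
      intro a c hac
      have hgg : G (0, a) = G (0, c) := by rw [hGfh, hGfh, hac]
      exact congrArg Prod.snd (G.injective hgg)
    have hhsurj : Function.Surjective h := by
      intro c
      obtain ⟨p, hp⟩ := G.surjective (f 0, c)
      refine ⟨p.2, ?_⟩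
      have h2 : G (p.1, p.2) = (f p.1, h p.2) := hGfh p.1 p.2
      rw [Prod.mk.eta, hp] at h2
      exact (congrArg Prod.snd h2.symm)
    have hfsm : StrictMono f := hfmono.strictMono_of_injective hfinj
    have hhsm : StrictMono h := hhmono.strictMono_of_injective hhinj
    let φ : ℝ ≃ₜ ℝ := (StrictMono.orderIsoOfSurjective f hfsm hfsurj).toHomeomorph
    let hH : ℝ ≃ₜ ℝ := (StrictMono.orderIsoOfSurjective h hhsm hhsurj).toHomeomorph
    let ψ : ℝ ≃ₜ ℝ := ((Homeomorph.neg ℝ).trans hH).trans (Homeomorph.neg ℝ)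
    have hφ : ∀ x, φ x = f x := fun x => rfl
    have hψ : ∀ x, ψ x = -(h (-x)) := fun x => rfl
    refine ⟨(φ, ψ), Or.inl ⟨?_, ?_, ?_⟩⟩
    · intro a c hac
      show φ a < φ c
      rw [hφ, hφ]; exact hfsm hac
    · intro a c hac
      show ψ a < ψ c
      rw [hψ, hψ]; exact neg_lt_neg (hhsm (neg_lt_neg hac))
    · intro x t
      have hFp : F (x, t) = eMink.symm (G (eMink (x, t))) := by
        simp [hGdef]
      rw [hFp]
      have he : eMink (x, t) = (x + t, t - x) := rfl
      rw [he, hGfh]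
      rw [Prod.ext_iff]
      constructor
      · show (f (x + t) - h (t - x)) / 2 = (φ (x + t) + ψ (x - t)) / 2
        rw [hφ, hψ, neg_sub]; ring
      · show (f (x + t) + h (t - x)) / 2 = (φ (x + t) - ψ (x - t)) / 2
        rw [hφ, hψ, neg_sub]; ring
  · -- decreasing case: G (u, w) = (g w, k u)
    set g : ℝ → ℝ := fun w => A 0 w with hgdef
    set k : ℝ → ℝ := fun u => B u 0 with hkdef
    have hGgk : ∀ u w : ℝ, G (u, w) = (g w, k u) := fun u w =>
      Prod.ext (hA u 0 w) (hB u w 0)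
    have hgmono : Monotone g := by
      intro a c hac
      have hle : ((0, a) : ℝ × ℝ) ≤ (0, c) := ⟨le_refl 0, hac⟩
      have := (hG _ _).mp hle
      rw [hGgk, hGgk] at this
      exact this.1
    have hginj : Function.Injective g := by
      intro a c hac
      have hgg : G (0, a) = G (0, c) := by rw [hGgk, hGgk, hac]
      exact congrArg Prod.snd (G.injective hgg)
    have hgsurj : Function.Surjective g := by
      intro c
      obtain ⟨p, hp⟩ := G.surjective (c, k 0)
      refine ⟨p.2, ?_⟩
      have h2 : G (p.1, p.2) = (g p.2, k p.1) := hGgk p.1 p.2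
      rw [Prod.mk.eta, hp] at h2
      exact (congrArg Prod.fst h2.symm)
    have hkmono : Monotone k := by
      intro a c hac
      have hle : ((a, 0) : ℝ × ℝ) ≤ (c, 0) := ⟨hac, le_refl 0⟩
      have := (hG _ _).mp hle
      rw [hGgk, hGgk] at this
      exact this.2
    have hkinj : Function.Injective k := by
      intro a c hac
      have hgg : G (a, 0) = G (c, 0) := by rw [hGgk, hGgk, hac]
      exact congrArg Prod.fst (G.injective hgg)
    have hksurj : Function.Surjective k := by
      intro c
      obtain ⟨p, hp⟩ := G.surjective (g 0, c)
      refine ⟨p.1, ?_⟩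
      have h2 : G (p.1, p.2) = (g p.2, k p.1) := hGgk p.1 p.2
      rw [Prod.mk.eta, hp] at h2
      exact (congrArg Prod.snd h2.symm)
    have hgsm : StrictMono g := hgmono.strictMono_of_injective hginj
    have hksm : StrictMono k := hkmono.strictMono_of_injective hkinj
    let gH : ℝ ≃ₜ ℝ := (StrictMono.orderIsoOfSurjective g hgsm hgsurj).toHomeomorph
    let kH : ℝ ≃ₜ ℝ := (StrictMono.orderIsoOfSurjective k hksm hksurj).toHomeomorph
    let φ : ℝ ≃ₜ ℝ := (Homeomorph.neg ℝ).trans gH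
    let ψ : ℝ ≃ₜ ℝ := kH.trans (Homeomorph.neg ℝ)
    have hφ : ∀ x, φ x = g (-x) := fun x => rfl
    have hψ : ∀ x, ψ x = -(k x) := fun x => rfl
    refine ⟨(φ, ψ), Or.inr ⟨?_, ?_, ?_⟩⟩
    · intro a c hac
      show φ c < φ a
      rw [hφ, hφ]; exact hgsm (neg_lt_neg hac)
    · intro a c hac
      show ψ c < ψ a
      rw [hψ, hψ]; exact neg_lt_neg (hksm hac)
    · intro x t
      have hFp : F (x, t) = eMink.symm (G (eMink (x, t))) := by
        simp [hGdef]
      rw [hFp]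
      have he : eMink (x, t) = (x + t, t - x) := rfl
      rw [he, hGgk]
      rw [Prod.ext_iff]
      constructor
      · show (g (t - x) - k (x + t)) / 2 = (φ (x - t) + ψ (x + t)) / 2
        rw [hφ, hψ, neg_sub]; ring
      · show (g (t - x) + k (x + t)) / 2 = (φ (x - t) - ψ (x + t)) / 2
        rw [hφ, hψ, neg_sub]; ring
  · exfalso
    have hgg : G (0, 0) = G (1, 0) := Prod.ext (hA 0 1 0) (hB 0 1 0)
    have := G.injective hgg
    simpa using congrArg Prod.fst this

private lemma mixed_impossible {F : ℝ × ℝ → ℝ × ℝ} {φ ψ φ' ψ' : ℝ ≃ₜ ℝ}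
    (hm : StrictMono φ)
    (he : ∀ x t : ℝ, F (x, t) = ((φ (x + t) + ψ (x - t)) / 2, (φ (x + t) - ψ (x - t)) / 2))
    (he' : ∀ x t : ℝ, F (x, t) = ((φ' (x - t) + ψ' (x + t)) / 2, (φ' (x - t) - ψ' (x + t)) / 2)) :
    False := by
  have hval : ∀ x t : ℝ, φ (x + t) = φ' (x - t) := by
    intro x t
    have hc := (he x t).symm.trans (he' x t)
    rw [Prod.mk.injEq] at hc
    obtain ⟨h1, h2⟩ := hc
    linarith
  have e0 : φ 0 = φ' 0 := by simpa using hval 0 0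
  have e1 : φ 1 = φ' 0 := by
    have := hval (1/2) (1/2)
    norm_num at this
    exact this
  exact (hm zero_lt_one).ne' (e1.trans e0.symm)

private lemma form_unique {F : ℝ × ℝ → ℝ × ℝ} {p q : (ℝ ≃ₜ ℝ) × (ℝ ≃ₜ ℝ)}
    (hp : MinkForm p.1 p.2 F) (hq : MinkForm q.1 q.2 F) : p = q := by
  have same : ∀ (he : ∀ x t : ℝ, F (x, t) =
        ((p.1 (x + t) + p.2 (x - t)) / 2, (p.1 (x + t) - p.2 (x - t)) / 2))
      (he' : ∀ x t : ℝ, F (x, t) =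
        ((q.1 (x + t) + q.2 (x - t)) / 2, (q.1 (x + t) - q.2 (x - t)) / 2)), p = q := by
    intro he he'
    have key : ∀ s : ℝ, p.1 s = q.1 s ∧ p.2 s = q.2 s := by
      intro s
      have hc := (he s 0).symm.trans (he' s 0)
      simp only [add_zero, sub_zero, Prod.mk.injEq] at hc
      obtain ⟨h1, h2⟩ := hc
      exact ⟨by linarith, by linarith⟩
    exact Prod.ext (Homeomorph.ext fun s => (key s).1) (Homeomorph.ext fun s => (key s).2)
  have same' : ∀ (he : ∀ x t : ℝ, F (x, t) =
        ((p.1 (x - t) + p.2 (x + t)) / 2, (p.1 (x - t) - p.2 (x + t)) / 2))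
      (he' : ∀ x t : ℝ, F (x, t) =
        ((q.1 (x - t) + q.2 (x + t)) / 2, (q.1 (x - t) - q.2 (x + t)) / 2)), p = q := by
    intro he he'
    have key : ∀ s : ℝ, p.1 s = q.1 s ∧ p.2 s = q.2 s := by
      intro s
      have hc := (he s 0).symm.trans (he' s 0)
      simp only [add_zero, sub_zero, Prod.mk.injEq] at hc
      obtain ⟨h1, h2⟩ := hc
      exact ⟨by linarith, by linarith⟩
    exact Prod.ext (Homeomorph.ext fun s => (key s).1) (Homeomorph.ext fun s => (key s).2)
  rcases hp with ⟨hm1, hm2, he⟩ | ⟨ha1, ha2, he⟩ <;>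
    rcases hq with ⟨hm1', hm2', he'⟩ | ⟨ha1', ha2', he'⟩
  · exact same he he'
  · exact absurd (mixed_impossible hm1 he he') id
  · exact absurd (mixed_impossible hm1' he' he) id
  · exact same' he he'

private noncomputable def ePlus : (ℝ × ℝ) ≃ (ℝ × ℝ) where
  toFun p := (p.1 + p.2, p.1 - p.2)
  invFun q := ((q.1 + q.2) / 2, (q.1 - q.2) / 2)
  left_inv p := by apply Prod.ext <;> simp
  right_inv q := by apply Prod.ext <;> simp <;> ring

private lemma converse_part (φ ψ : ℝ ≃ₜ ℝ) (F : ℝ × ℝ → ℝ × ℝ) (h : MinkForm φ ψ F) :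
    Function.Bijective F ∧ ∀ p q, MinkRel p q ↔ MinkRel (F p) (F q) := by
  rcases h with ⟨h1, h2, h3⟩ | ⟨h1, h2, h3⟩
  · constructor
    · have hFE : F = ⇑(ePlus.trans ((φ.toEquiv.prodCongr ψ.toEquiv).trans ePlus.symm)) := by
        funext p
        obtain ⟨x, t⟩ := p
        rw [h3 x t]
        rfl
      rw [hFE]
      exact Equiv.bijective _
    · intro p q
      obtain ⟨x, t⟩ := p
      obtain ⟨y, s⟩ := q
      have k1 : ∀ x t : ℝ, (F (x, t)).1 + (F (x, t)).2 = φ (x + t) := by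
        intro x t; rw [h3]; dsimp only; ring
      have k2 : ∀ x t : ℝ, (F (x, t)).1 - (F (x, t)).2 = ψ (x - t) := by
        intro x t; rw [h3]; dsimp only; ring
      rw [minkRel_iff, minkRel_iff, k1, k2, k1, k2]
      dsimp only
      exact and_congr h1.le_iff_le.symm h2.le_iff_le.symm
  · constructor
    · have hFE : F = ⇑(ePlus.trans ((Equiv.prodComm ℝ ℝ).trans
          ((φ.toEquiv.prodCongr ψ.toEquiv).trans ePlus.symm))) := by
        funext p
        obtain ⟨x, t⟩ := p
        rw [h3 x t]
        rfl
      rw [hFE]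
      exact Equiv.bijective _
    · intro p q
      obtain ⟨x, t⟩ := p
      obtain ⟨y, s⟩ := q
      have k1 : ∀ x t : ℝ, (F (x, t)).1 + (F (x, t)).2 = φ (x - t) := by
        intro x t; rw [h3]; dsimp only; ring
      have k2 : ∀ x t : ℝ, (F (x, t)).1 - (F (x, t)).2 = ψ (x + t) := by
        intro x t; rw [h3]; dsimp only; ring
      rw [minkRel_iff, minkRel_iff, k1, k2, k1, k2]
      dsimp only
      constructor
      · rintro ⟨ha, hb⟩
        exact ⟨h1.le_iff_ge.mpr hb, h2.le_iff_ge.mpr ha⟩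
      · rintro ⟨ha, hb⟩
        exact ⟨h2.le_iff_ge.mp hb, h1.le_iff_ge.mp ha⟩

/-- Every causal automorphism `F` of `ℝ²₁` is given by a unique pair of
homeomorphisms `φ, ψ` of `ℝ`, either both increasing or both decreasing, via
`F(x,t) = ½(φ(x+t)+ψ(x−t), φ(x+t)−ψ(x−t))` (increasing case) or
`F(x,t) = ½(φ(x−t)+ψ(x+t), φ(x−t)−ψ(x+t))` (decreasing case); and conversely any map of
this form is a causal automorphism of `ℝ²₁`. -/
theorem causal_automorphism_R2_characterization :
    (∀ F : Equiv.Perm (ℝ × ℝ), (∀ p q, MinkRel p q ↔ MinkRel (F p) (F q)) →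
      ∃! pr : (ℝ ≃ₜ ℝ) × (ℝ ≃ₜ ℝ), MinkForm pr.1 pr.2 F) ∧
    (∀ (φ ψ : ℝ ≃ₜ ℝ) (F : ℝ × ℝ → ℝ × ℝ), MinkForm φ ψ F →
      Function.Bijective F ∧ ∀ p q, MinkRel p q ↔ MinkRel (F p) (F q)) := by
  constructor
  · intro F hF
    obtain ⟨pr, hpr⟩ := exists_form F hF
    exact ⟨pr, hpr, fun pr' hpr' => form_unique hpr' hpr⟩
  · exact converse_part
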